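/- If μ > 0 with μ ≠ μ₁(p) and v is a nontrivial solution of problem (AP), then v changes sign: there exist r₁, r₂ ∈ (0,1) with v(r₁) > 0 and v(r₂) < 0. -/

import Mathlib

open Set Filter Topology intervalIntegral

/-- `v` (with derivative `v'`) is a solution of problem (AP) with exponent `p`,
weight `a` and parameter `μ`: `v ∈ C¹[0,1]`, `r ↦ |v'|^{p-2} v'` is differentiable on `(0,1)`
with derivative `-(μ^{p-1}(p-1) r^{p-2} a(r) |v|^{p-2} v)`, and `v'(0) = v(1) = 0`. -/
def APSol (p μ : ℝ) (a v v' : ℝ → ℝ) : Prop :=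
  ContinuousOn v' (Icc 0 1) ∧
  (∀ r ∈ Icc (0:ℝ) 1, HasDerivWithinAt v (v' r) (Icc 0 1) r) ∧
  (∀ r ∈ Ioo (0:ℝ) 1,
    HasDerivAt (fun t => |v' t| ^ (p - 2) * v' t)
      (-(μ ^ (p - 1) * (p - 1) * r ^ (p - 2) * a r * (|v r| ^ (p - 2) * v r))) r) ∧
  v' 0 = 0 ∧ v 1 = 0

/-- The Rayleigh-quotient infimum `η₁(p)`. -/
noncomputable def eta1 (a : ℝ → ℝ) (p : ℝ) : ℝ :=
  sInf { q : ℝ | ∃ v v' : ℝ → ℝ,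
    ContinuousOn v' (Icc 0 1) ∧
    (∀ r ∈ Icc (0:ℝ) 1, HasDerivWithinAt v (v' r) (Icc 0 1) r) ∧
    v' 0 = 0 ∧ v 1 = 0 ∧ (∃ r ∈ Icc (0:ℝ) 1, v r ≠ 0) ∧
    q = (∫ r in (0:ℝ)..1, |v' r| ^ p) /
        ((p - 1) * ∫ r in (0:ℝ)..1, r ^ (p - 2) * a r * |v r| ^ p) }

/-- The principal eigenvalue `μ₁(p) = η₁(p)^{1/(p-1)}`. -/
noncomputable def mu1 (a : ℝ → ℝ) (p : ℝ) : ℝ := eta1 a p ^ (1 / (p - 1))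


set_option linter.unusedSectionVars false
set_option maxHeartbeats 1000000

section Helpers
variable {p : ℝ} (hp : 2 ≤ p)
include hp

lemma hp1 : (1:ℝ) < p := lt_of_lt_of_le one_lt_two hp
lemma hpm1 : (0:ℝ) < p - 1 := by linarith
lemma hpm2 : (0:ℝ) ≤ p - 2 := by linarith
lemma hpne : p - 1 ≠ 0 := ne_of_gt (hpm1 hp)
lemma hppos : (0:ℝ) < p := by linarith

omit hp in
lemma cont_rpow {q : ℝ} (hq : 0 ≤ q) : Continuous fun t : ℝ => t ^ q := by
  rcases eq_or_lt_of_le hq with h | h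
  · simp only [← h, Real.rpow_zero]; exact continuous_const
  · exact continuous_iff_continuousAt.2 fun x =>
      Real.continuousAt_rpow_const x q (Or.inr h.le)

omit hp in
lemma cont_abs_rpow {q : ℝ} (hq : 0 ≤ q) : Continuous fun t : ℝ => |t| ^ q :=
  (cont_rpow hq).comp continuous_abs

omit hp in
lemma absmul_nonneg (x : ℝ) (hx : 0 ≤ x) : 0 ≤ |x| ^ (p-2) * x :=
  mul_nonneg (Real.rpow_nonneg (abs_nonneg x) _) hx

omit hp in
lemma absmul_pos (x : ℝ) (hx : 0 < x) : 0 < |x| ^ (p-2) * x :=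
  mul_pos (Real.rpow_pos_of_pos (abs_pos.2 hx.ne') _) hx

omit hp in
lemma absmul_nonpos_imp {x : ℝ} (h : |x| ^ (p-2) * x ≤ 0) : x ≤ 0 := by
  by_contra hx
  exact absurd h (not_le.2 (absmul_pos x (not_le.1 hx)))

omit hp in
lemma absmul_eq_zero_imp {x : ℝ} (h : |x| ^ (p-2) * x = 0) : x = 0 := by
  rcases lt_trichotomy x 0 with h0 | h0 | h0
  · have := absmul_pos (p := p) (-x) (by linarith)
    rw [abs_neg] at this
    nlinarith
  · exact h0
  · exact absurd h (ne_of_gt (absmul_pos x h0))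

lemma absmul_mul_self (x : ℝ) : |x| ^ (p-2) * x * x = |x| ^ p := by
  rcases eq_or_ne x 0 with rfl | hx
  · rw [mul_zero, abs_zero, Real.zero_rpow (ne_of_gt (hppos hp))]
  · have h1 : x * x = |x| * |x| := (abs_mul_abs_self x).symm
    have h2 : |x| ≠ 0 := abs_ne_zero.2 hx
    rw [mul_assoc, h1, ← mul_assoc, ← Real.rpow_add_one h2, ← Real.rpow_add_one h2]
    ring_nf

lemma absmul_of_nonpos {x : ℝ} (hx : x ≤ 0) : |x| ^ (p-2) * x = -(|x| ^ (p-1)) := by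
  rcases eq_or_lt_of_le hx with rfl | hx'
  · simp [Real.zero_rpow (hpne hp)]
  · have h2 : |x| ≠ 0 := abs_ne_zero.2 hx'.ne
    have hxe : x = -|x| := by rw [abs_of_neg hx']; ring
    nth_rewrite 2 [hxe]
    rw [mul_neg, ← Real.rpow_add_one h2]
    ring_nf

omit hp in
lemma absmul_of_pos {x : ℝ} (hx : 0 < x) : |x| ^ (p-2) * x = x ^ (p-1) := by
  nth_rewrite 1 [abs_of_pos hx]
  rw [← Real.rpow_add_one hx.ne']
  ring_nf

lemma abs_absmul (x : ℝ) : |(|x| ^ (p-2) * x)| = |x| ^ (p-1) := by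
  rcases eq_or_ne x 0 with rfl | hx
  · simp [Real.zero_rpow (hpne hp)]
  · rw [abs_mul, abs_of_nonneg (Real.rpow_nonneg (abs_nonneg x) _),
      ← Real.rpow_add_one (abs_ne_zero.2 hx)]
    ring_nf

end Helpers

/-- bound for continuous function on Icc 0 1 -/
lemma exists_bound {f : ℝ → ℝ} (hf : ContinuousOn f (Icc 0 1)) :
    ∃ M : ℝ, 0 ≤ M ∧ ∀ t ∈ Icc (0:ℝ) 1, |f t| ≤ M := by
  obtain ⟨C, hC⟩ := isCompact_Icc.exists_bound_of_continuousOn hf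
  exact ⟨max C 0, le_max_right _ _, fun t ht => le_trans (hC t ht) (le_max_left _ _)⟩

lemma integral_pos_aux {g : ℝ → ℝ} (hg : ContinuousOn g (Icc 0 1))
    (hg0 : ∀ t ∈ Icc (0:ℝ) 1, 0 ≤ g t) {r : ℝ} (hr : r ∈ Ioo (0:ℝ) 1) (hgr : 0 < g r) :
    0 < ∫ t in (0:ℝ)..1, g t := by
  have hint : ∀ c d : ℝ, c ∈ Icc (0:ℝ) 1 → d ∈ Icc (0:ℝ) 1 →
      IntervalIntegrable g MeasureTheory.volume c d := fun c d hc hd =>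
    (hg.mono (uIcc_subset_Icc hc hd)).intervalIntegrable
  -- find subinterval
  have hcw : ContinuousWithinAt g (Icc 0 1) r := hg r ⟨hr.1.le, hr.2.le⟩
  have hn : Icc (0:ℝ) 1 ∈ 𝓝 r := Icc_mem_nhds hr.1 hr.2
  have hca : ContinuousAt g r := hcw.continuousAt hn
  have hev : ∀ᶠ y in 𝓝 r, g r / 2 < g y :=
    hca.eventually_const_lt (by linarith)
  obtain ⟨ε, hε, hball⟩ := Metric.eventually_nhds_iff.1 hev
  set e := min ε (min r (1 - r)) with he
  have he0 : 0 < e := lt_min hε (lt_min hr.1 (by linarith [hr.2]))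
  set α := r - e/2 with hα
  set β := r + e/2 with hβ
  have hαβ : α < β := by simp only [hα, hβ]; linarith
  have hα0 : 0 < α := by
    have : e ≤ r := le_trans (min_le_right _ _) (min_le_left _ _)
    simp only [hα]; linarith
  have hβ1 : β < 1 := by
    have : e ≤ 1 - r := le_trans (min_le_right _ _) (min_le_right _ _)
    simp only [hβ]; linarith
  have hsub : Icc α β ⊆ Icc (0:ℝ) 1 := Icc_subset_Icc (by linarith) (by linarith)
  have hge : ∀ t ∈ Icc α β, g r / 2 ≤ g t := by
    intro t ht
    refine (hball ?_).le
    rw [Real.dist_eq, abs_sub_lt_iff]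
    have h1 := ht.1; have h2 := ht.2
    constructor <;> simp only [hα, hβ] at h1 h2 <;> linarith [min_le_left ε (min r (1-r))]
  have hmemα : α ∈ Icc (0:ℝ) 1 := ⟨hα0.le, by linarith⟩
  have hmemβ : β ∈ Icc (0:ℝ) 1 := ⟨by linarith, hβ1.le⟩
  have h01 : (0:ℝ) ∈ Icc (0:ℝ) 1 := by norm_num
  have h11 : (1:ℝ) ∈ Icc (0:ℝ) 1 := by norm_num
  have hsplit : (∫ t in (0:ℝ)..1, g t)
      = (∫ t in (0:ℝ)..α, g t) + (∫ t in α..β, g t) + (∫ t in β..(1:ℝ), g t) := by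
    rw [integral_add_adjacent_intervals (hint 0 α h01 hmemα) (hint α β hmemα hmemβ),
      integral_add_adjacent_intervals (hint 0 β h01 hmemβ) (hint β 1 hmemβ h11)]
  have h1 : 0 ≤ ∫ t in (0:ℝ)..α, g t :=
    integral_nonneg hα0.le (fun u hu => hg0 u ⟨hu.1, le_trans hu.2 hmemα.2⟩)
  have h3 : 0 ≤ ∫ t in β..(1:ℝ), g t :=
    integral_nonneg hβ1.le (fun u hu => hg0 u ⟨le_trans hmemβ.1 hu.1, hu.2⟩)
  have h2 : (g r / 2) * (β - α) ≤ ∫ t in α..β, g t := by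
    have := integral_mono_on (μ := MeasureTheory.volume) (f := fun _ => g r / 2) (g := g)
      hαβ.le intervalIntegrable_const (hint α β hmemα hmemβ) hge
    simp only [intervalIntegral.integral_const, smul_eq_mul] at this
    linarith
  have hba : 0 < β - α := by linarith
  nlinarith

lemma intInt01 {f : ℝ → ℝ} (h : ContinuousOn f (Icc 0 1)) :
    IntervalIntegrable f MeasureTheory.volume 0 1 := by
  apply ContinuousOn.intervalIntegrable
  rwa [uIcc_of_le (by norm_num : (0:ℝ) ≤ 1)]

lemma ftc_Icc {f f' : ℝ → ℝ} {s t : ℝ} (hst : s ≤ t) (hc : ContinuousOn f (Icc s t))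
    (hd : ∀ x ∈ Ioo s t, HasDerivAt f (f' x) x)
    (hi : IntervalIntegrable f' MeasureTheory.volume s t) :
    ∫ x in s..t, f' x = f t - f s :=
  integral_eq_sub_of_hasDeriv_right_of_le hst hc (fun x hx => (hd x hx).hasDerivWithinAt) hi

lemma rayleigh_identity {p : ℝ} (hp : 2 ≤ p) {a : ℝ → ℝ} (ha : ContinuousOn a (Icc 0 1))
    {μ : ℝ} {v v' : ℝ → ℝ} (hv : APSol p μ a v v') :
    (∫ r in (0:ℝ)..1, |v' r| ^ p)
      = μ ^ (p-1) * ((p-1) * ∫ r in (0:ℝ)..1, r ^ (p-2) * a r * |v r| ^ p) := by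
  obtain ⟨hv'c, hvd, heq, hv'0, hv1⟩ := hv
  set w : ℝ → ℝ := fun t => |v' t| ^ (p-2) * v' t with hw
  set C : ℝ → ℝ := fun r => μ ^ (p-1) * (p-1) * r ^ (p-2) * a r * (|v r| ^ (p-2) * v r)
    with hC
  have hvc : ContinuousOn v (Icc 0 1) := fun r hr => (hvd r hr).continuousWithinAt
  have hwc : ContinuousOn w (Icc 0 1) :=
    ((cont_abs_rpow (by linarith : (0:ℝ) ≤ p - 2)).mul continuous_id).comp_continuousOn hv'c
  have hCc : ContinuousOn C (Icc 0 1) := by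
    apply ContinuousOn.mul
    apply ContinuousOn.mul
    · exact (continuous_const.mul (cont_rpow (by linarith : (0:ℝ) ≤ p - 2))).continuousOn
    · exact ha
    · exact ((cont_abs_rpow (by linarith : (0:ℝ) ≤ p - 2)).mul continuous_id).comp_continuousOn hvc
  have hFc : ContinuousOn (fun t => w t * v t) (Icc 0 1) := hwc.mul hvc
  have hd : ∀ x ∈ Ioo (0:ℝ) 1, HasDerivAt (fun t => w t * v t)
      (-(C x) * v x + w x * v' x) x := by
    intro x hx
    exact (heq x hx).mul ((hvd x ⟨hx.1.le, hx.2.le⟩).hasDerivAt (Icc_mem_nhds hx.1 hx.2))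
  have hi1 : IntervalIntegrable (fun r => -(C r) * v r) MeasureTheory.volume 0 1 :=
    intInt01 ((hCc.neg).mul hvc)
  have hi2 : IntervalIntegrable (fun r => w r * v' r) MeasureTheory.volume 0 1 :=
    intInt01 (hwc.mul hv'c)
  have hftc : (∫ x in (0:ℝ)..1, (-(C x) * v x + w x * v' x)) = 0 := by
    rw [ftc_Icc (by norm_num) hFc hd (hi1.add hi2)]
    have hw0 : w 0 = 0 := by simp only [hw, hv'0, mul_zero]
    rw [hv1, hw0, mul_zero, zero_mul, sub_zero]
  rw [integral_add hi1 hi2] at hftc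
  have e1 : (∫ r in (0:ℝ)..1, w r * v' r) = ∫ r in (0:ℝ)..1, |v' r| ^ p := by
    congr 1
    funext r
    rw [hw, absmul_mul_self hp]
  have e2 : (∫ r in (0:ℝ)..1, -(C r) * v r)
      = -(μ ^ (p-1) * (p-1) * ∫ r in (0:ℝ)..1, r ^ (p-2) * a r * |v r| ^ p) := by
    have : (fun r => -(C r) * v r)
        = fun r => (μ ^ (p-1) * (p-1)) * -(r ^ (p-2) * a r * |v r| ^ p) := by
      funext r
      rw [hC, ← absmul_mul_self hp (v r)]
      ring
    rw [this, integral_const_mul, integral_neg]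
    ring
  rw [e1, e2] at hftc
  linarith [hftc]

section S4
variable {p : ℝ} (hp : 2 ≤ p)

-- continuity of integrand r^{p-2} * a r * |u r|^p
include hp in
lemma contOn_weight {a u : ℝ → ℝ} (ha : ContinuousOn a (Icc 0 1))
    (huc : ContinuousOn u (Icc 0 1)) :
    ContinuousOn (fun r : ℝ => r ^ (p-2) * a r * |u r| ^ p) (Icc 0 1) := by
  have h1 : ContinuousOn (fun r : ℝ => r ^ (p-2)) (Icc 0 1) :=
    (cont_rpow (by linarith : (0:ℝ) ≤ p - 2)).continuousOn
  have h2 : ContinuousOn (fun r : ℝ => |u r| ^ p) (Icc 0 1) :=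
    (cont_abs_rpow (by linarith : (0:ℝ) ≤ p)).comp_continuousOn huc
  exact (h1.mul ha).mul h2

include hp in
lemma denom_pos {a : ℝ → ℝ} (ha : ContinuousOn a (Icc 0 1))
    (ha0 : ∀ r ∈ Icc (0:ℝ) 1, 0 ≤ a r)
    (hanv : ∀ s t : ℝ, 0 ≤ s → s < t → t ≤ 1 → ∃ r ∈ Ioo s t, a r ≠ 0)
    {u : ℝ → ℝ} (huc : ContinuousOn u (Icc 0 1)) (hu1 : u 1 = 0)
    (hunt : ∃ r ∈ Icc (0:ℝ) 1, u r ≠ 0) :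
    0 < ∫ r in (0:ℝ)..1, r ^ (p-2) * a r * |u r| ^ p := by
  obtain ⟨r₀, hr₀m, hr₀⟩ := hunt
  have hr₀1 : r₀ < 1 := lt_of_le_of_ne hr₀m.2 (fun h => hr₀ (h ▸ hu1))
  have habs : 0 < |u r₀| := abs_pos.2 hr₀
  have hev : ∀ᶠ y in 𝓝[Icc (0:ℝ) 1] r₀, |u r₀| / 2 < |u y| :=
    ((huc r₀ hr₀m).abs).eventually_const_lt (by linarith)
  rw [eventually_nhdsWithin_iff, Metric.eventually_nhds_iff] at hev
  obtain ⟨ε, hε, hball⟩ := hev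
  set t' := min (r₀ + ε/2) ((r₀ + 1)/2) with ht'
  have h1 : r₀ < t' := lt_min (by linarith) (by linarith)
  have h2 : t' < 1 := lt_of_le_of_lt (min_le_right _ _) (by linarith)
  obtain ⟨r, hrm, har⟩ := hanv r₀ t' hr₀m.1 h1 (le_of_lt h2)
  have hr01 : r ∈ Ioo (0:ℝ) 1 := ⟨lt_of_le_of_lt hr₀m.1 hrm.1, lt_trans hrm.2 h2⟩
  have hrIcc : r ∈ Icc (0:ℝ) 1 := ⟨hr01.1.le, hr01.2.le⟩
  have hrb : dist r r₀ < ε := by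
    rw [Real.dist_eq, abs_of_pos (by linarith [hrm.1] : 0 < r - r₀)]
    have : t' ≤ r₀ + ε/2 := min_le_left _ _
    linarith [hrm.2]
  have hur : |u r₀| / 2 < |u r| := hball hrb hrIcc
  apply integral_pos_aux (contOn_weight hp ha huc)
  · intro t ht
    have h2' : (0:ℝ) ≤ |u t| ^ p := Real.rpow_nonneg (abs_nonneg _) _
    have h3 : (0:ℝ) ≤ t ^ (p-2) := Real.rpow_nonneg ht.1 _
    exact mul_nonneg (mul_nonneg h3 (ha0 t ht)) h2'
  · exact hr01
  · have hrp : (0:ℝ) < r ^ (p-2) := Real.rpow_pos_of_pos hr01.1 _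
    have hap : 0 < a r := lt_of_le_of_ne (ha0 r hrIcc) (Ne.symm har)
    have hup : (0:ℝ) < |u r| ^ p := Real.rpow_pos_of_pos (by linarith) _
    positivity


end S4

section Key
variable {p : ℝ} (hp : 2 ≤ p) {a : ℝ → ℝ} (ha : ContinuousOn a (Icc 0 1))
  (ha0 : ∀ r ∈ Icc (0:ℝ) 1, 0 ≤ a r)
  {μ : ℝ} (hμ : 0 < μ) {v v' : ℝ → ℝ} (hv : APSol p μ a v v')
  (hnt : ∃ r ∈ Icc (0:ℝ) 1, v r ≠ 0) (hpos : ∀ r ∈ Icc (0:ℝ) 1, 0 ≤ v r)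
include hp ha ha0 hμ hv hnt hpos

lemma key_pos : ∀ r ∈ Ico (0:ℝ) 1, 0 < v r := by
  obtain ⟨hv'c, hvd, heq, hv'0, hv1⟩ := hv
  set w : ℝ → ℝ := fun t => |v' t| ^ (p-2) * v' t with hw
  have h01 : (0:ℝ) ∈ Icc (0:ℝ) 1 := by norm_num
  have hwc : ContinuousOn w (Icc 0 1) :=
    ((cont_abs_rpow (by linarith : (0:ℝ) ≤ p - 2)).mul continuous_id).comp_continuousOn hv'c
  have hw0 : w 0 = 0 := by simp only [hw, hv'0, mul_zero]
  have hwanti : AntitoneOn w (Icc 0 1) := by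
    apply antitoneOn_of_deriv_nonpos (convex_Icc 0 1) hwc
    · intro x hx
      rw [interior_Icc] at hx
      exact ((heq x hx).differentiableAt).differentiableWithinAt
    · intro x hx
      rw [interior_Icc] at hx
      rw [(heq x hx).deriv]
      have h1 : (0:ℝ) ≤ μ ^ (p-1) := Real.rpow_nonneg hμ.le _
      have h2 : (0:ℝ) ≤ x ^ (p-2) := Real.rpow_nonneg hx.1.le _
      have h3 : 0 ≤ a x := ha0 x ⟨hx.1.le, hx.2.le⟩
      have h4 : 0 ≤ |v x| ^ (p-2) * v x := absmul_nonneg _ (hpos x ⟨hx.1.le, hx.2.le⟩)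
      have : 0 ≤ μ ^ (p-1) * (p-1) * x ^ (p-2) * a x * (|v x| ^ (p-2) * v x) := by
        apply mul_nonneg (mul_nonneg (mul_nonneg (mul_nonneg h1 (by linarith)) h2) h3) h4
      linarith
  have hwle : ∀ t ∈ Icc (0:ℝ) 1, w t ≤ 0 := fun t ht => hw0 ▸ hwanti h01 ht ht.1
  have hv'le : ∀ t ∈ Icc (0:ℝ) 1, v' t ≤ 0 := fun t ht => absmul_nonpos_imp (hwle t ht)
  have hvc : ContinuousOn v (Icc 0 1) := fun r hr => (hvd r hr).continuousWithinAt
  have hvanti : AntitoneOn v (Icc 0 1) := by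
    apply antitoneOn_of_deriv_nonpos (convex_Icc 0 1) hvc
    · intro x hx
      rw [interior_Icc] at hx
      exact ((hvd x ⟨hx.1.le, hx.2.le⟩).hasDerivAt (Icc_mem_nhds hx.1 hx.2)).differentiableAt.differentiableWithinAt
    · intro x hx
      rw [interior_Icc] at hx
      rw [((hvd x ⟨hx.1.le, hx.2.le⟩).hasDerivAt (Icc_mem_nhds hx.1 hx.2)).deriv]
      exact hv'le x ⟨hx.1.le, hx.2.le⟩
  -- v 0 > 0
  obtain ⟨rs, hrs, hrsne⟩ := hnt
  have hrspos : 0 < v rs := lt_of_le_of_ne (hpos rs hrs) (Ne.symm hrsne)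
  have hv0 : 0 < v 0 := lt_of_lt_of_le hrspos (hvanti h01 hrs hrs.1)
  -- main claim
  intro r hr
  by_contra hc
  have hvr : v r = 0 := le_antisymm (not_lt.1 hc) (hpos r ⟨hr.1, hr.2.le⟩)
  have hzero : ∀ t ∈ Icc r 1, v t = 0 := fun t ht =>
    le_antisymm (hvr ▸ hvanti ⟨hr.1, hr.2.le⟩ ⟨le_trans hr.1 ht.1, ht.2⟩ ht.1)
      (hpos t ⟨le_trans hr.1 ht.1, ht.2⟩)
  set x₀ := (r + 1) / 2 with hx₀
  have hrx₀ : r < x₀ := by simp only [hx₀]; linarith [hr.2]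
  have hx₀1 : x₀ < 1 := by simp only [hx₀]; linarith [hr.2]
  have hx₀0 : 0 < x₀ := lt_of_le_of_lt hr.1 hrx₀
  have hx₀m : x₀ ∈ Icc (0:ℝ) 1 := ⟨hx₀0.le, hx₀1.le⟩
  have hder0 : HasDerivAt v 0 x₀ := by
    apply (hasDerivAt_const x₀ (0:ℝ)).congr_of_eventuallyEq
    filter_upwards [Ioo_mem_nhds hrx₀ hx₀1] with y hy
    exact hzero y ⟨hy.1.le, hy.2.le⟩
  have hderv : HasDerivAt v (v' x₀) x₀ :=
    (hvd x₀ hx₀m).hasDerivAt (Icc_mem_nhds hx₀0 hx₀1)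
  have hv'x₀ : v' x₀ = 0 := hderv.unique hder0
  have hwx₀ : w x₀ = 0 := by simp only [hw, hv'x₀, mul_zero]
  have hwzero : ∀ t ∈ Icc (0:ℝ) x₀, w t = 0 := fun t ht =>
    le_antisymm (hwle t ⟨ht.1, le_trans ht.2 hx₀1.le⟩)
      (hwx₀ ▸ hwanti ⟨ht.1, le_trans ht.2 hx₀1.le⟩ hx₀m ht.2)
  have hv'zero : ∀ t ∈ Icc (0:ℝ) x₀, v' t = 0 := fun t ht =>
    absmul_eq_zero_imp (hwzero t ht)
  have hmono : MonotoneOn v (Icc 0 x₀) := by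
    apply monotoneOn_of_deriv_nonneg (convex_Icc 0 x₀)
      (hvc.mono (Icc_subset_Icc le_rfl hx₀1.le))
    · intro x hx
      rw [interior_Icc] at hx
      have hxm : x ∈ Icc (0:ℝ) 1 := ⟨hx.1.le, le_trans hx.2.le hx₀1.le⟩
      exact ((hvd x hxm).hasDerivAt
        (Icc_mem_nhds hx.1 (lt_of_lt_of_le hx.2 hx₀1.le))).differentiableAt.differentiableWithinAt
    · intro x hx
      rw [interior_Icc] at hx
      have hxm : x ∈ Icc (0:ℝ) 1 := ⟨hx.1.le, le_trans hx.2.le hx₀1.le⟩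
      rw [((hvd x hxm).hasDerivAt (Icc_mem_nhds hx.1 (lt_of_lt_of_le hx.2 hx₀1.le))).deriv]
      rw [hv'zero x ⟨hx.1.le, hx.2.le⟩]
  have : v 0 ≤ v x₀ := hmono ⟨le_rfl, hx₀0.le⟩ ⟨hx₀0.le, le_rfl⟩ hx₀0.le
  rw [hzero x₀ ⟨hrx₀.le, hx₀1.le⟩] at this
  linarith

end Key

lemma young_aux {p : ℝ} (hp : 2 ≤ p) {A B : ℝ} (hA : 0 ≤ A) (hB : 0 ≤ B) :
    p * (A ^ (p-1) * B) - (p-1) * A ^ p ≤ B ^ p := by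
  have hp1 : (1:ℝ) < p := by linarith
  have hpm1 : (0:ℝ) < p - 1 := by linarith
  have hconj : Real.HolderConjugate (p/(p-1)) p := by
    exact ((Real.holderConjugate_iff_eq_conjExponent hp1).2 rfl).symm
  have hy := Real.young_inequality_of_nonneg (Real.rpow_nonneg hA (p-1)) hB hconj
  have he : (A ^ (p-1)) ^ (p/(p-1)) = A ^ p := by
    rw [← Real.rpow_mul hA]
    congr 1
    field_simp
  rw [he, div_div_eq_mul_div] at hy
  have hp0 : (0:ℝ) < p := by linarith
  have h5 : p * (A ^ (p-1) * B) ≤ A ^ p * (p-1) + B ^ p := by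
    have h6 := mul_le_mul_of_nonneg_left hy hp0.le
    have h7 : p * (A ^ p * (p-1) / p + B ^ p / p) = A ^ p * (p-1) + B ^ p := by
      field_simp
    linarith [h6, h7.le, h7.ge]
  linarith

lemma picone_pt {p : ℝ} (hp : 2 ≤ p) (x y V V' : ℝ) (hV : 0 < V) :
    (|V'| ^ (p-2) * V') *
      ((p * |x| ^ (p-2) * x * y * V ^ (p-1) - |x| ^ p * ((p-1) * V ^ (p-2) * V'))
        / (V ^ (p-1)) ^ 2) ≤ |y| ^ p := by
  have hp1 : (1:ℝ) < p := by linarith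
  have hpm1 : (0:ℝ) < p - 1 := by linarith
  set A := |x| * |V'| / V with hA
  have hA0 : 0 ≤ A := by positivity
  set B := |y| with hB
  have hB0 : 0 ≤ B := abs_nonneg y
  have hD : (V ^ (p-1) : ℝ) ^ 2 = V ^ ((p-1) + (p-1)) := by
    rw [sq, ← Real.rpow_add hV]
  have hDpos : (0:ℝ) < (V ^ (p-1)) ^ 2 := by positivity
  rw [mul_div_assoc', div_le_iff₀ hDpos]
  -- key identities
  have IA : |x| ^ (p-1) * |V'| ^ (p-1) = A ^ (p-1) * V ^ (p-1) := by
    rw [hA, Real.div_rpow (by positivity) hV.le, Real.mul_rpow (abs_nonneg x) (abs_nonneg V')]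
    field_simp
  have IB : |x| ^ p * |V'| ^ p = A ^ p * V ^ p := by
    rw [hA, Real.div_rpow (by positivity) hV.le, Real.mul_rpow (abs_nonneg x) (abs_nonneg V')]
    field_simp
  -- bound the cross term
  have hcross : (|x| ^ (p-2) * x) * (|V'| ^ (p-2) * V') * y
      ≤ |x| ^ (p-1) * |V'| ^ (p-1) * |y| := by
    calc (|x| ^ (p-2) * x) * (|V'| ^ (p-2) * V') * y
        ≤ |(|x| ^ (p-2) * x) * (|V'| ^ (p-2) * V') * y| := le_abs_self _
      _ = |x| ^ (p-1) * |V'| ^ (p-1) * |y| := by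
          rw [abs_mul, abs_mul, abs_absmul hp, abs_absmul hp]
  -- rewrite LHS
  have hexp : (|V'| ^ (p-2) * V') *
      (p * |x| ^ (p-2) * x * y * V ^ (p-1) - |x| ^ p * ((p-1) * V ^ (p-2) * V'))
      = p * ((|x| ^ (p-2) * x) * (|V'| ^ (p-2) * V') * y) * V ^ (p-1)
        - (p-1) * (|x| ^ p * |V'| ^ p) * V ^ (p-2) := by
    have h2 : |V'| ^ (p-2) * V' * V' = |V'| ^ p := absmul_mul_self hp V'
    linear_combination (-(|x| ^ p * (p-1) * V ^ (p-2))) * h2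
  rw [hexp]
  have step1 : p * ((|x| ^ (p-2) * x) * (|V'| ^ (p-2) * V') * y) * V ^ (p-1)
        - (p-1) * (|x| ^ p * |V'| ^ p) * V ^ (p-2)
      ≤ p * (A ^ (p-1) * B) * (V ^ (p-1) * V ^ (p-1))
        - (p-1) * A ^ p * (V ^ (p-1) * V ^ (p-1)) := by
    have hVp1 : (0:ℝ) < V ^ (p-1) := Real.rpow_pos_of_pos hV _
    have e1 : p * ((|x| ^ (p-2) * x) * (|V'| ^ (p-2) * V') * y) * V ^ (p-1)
        ≤ p * (A ^ (p-1) * B) * (V ^ (p-1) * V ^ (p-1)) := by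
      have := mul_le_mul_of_nonneg_right hcross hVp1.le
      calc p * ((|x| ^ (p-2) * x) * (|V'| ^ (p-2) * V') * y) * V ^ (p-1)
          ≤ p * (|x| ^ (p-1) * |V'| ^ (p-1) * |y|) * V ^ (p-1) := by nlinarith [this]
        _ = p * (A ^ (p-1) * B) * (V ^ (p-1) * V ^ (p-1)) := by rw [IA]; ring
    have e2 : (p-1) * (|x| ^ p * |V'| ^ p) * V ^ (p-2)
        = (p-1) * A ^ p * (V ^ (p-1) * V ^ (p-1)) := by
      rw [IB]
      have hvv : V ^ p * V ^ (p-2) = V ^ (p-1) * V ^ (p-1) := by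
        rw [← Real.rpow_add hV, ← Real.rpow_add hV]
        congr 1
        ring
      calc (p-1) * (A ^ p * V ^ p) * V ^ (p-2) = (p-1) * A ^ p * (V ^ p * V ^ (p-2)) := by ring
        _ = (p-1) * A ^ p * (V ^ (p-1) * V ^ (p-1)) := by rw [hvv]
    linarith [e1, e2.le, e2.ge]
  refine le_trans step1 ?_
  have hfin : p * (A ^ (p-1) * B) - (p-1) * A ^ p ≤ B ^ p := young_aux hp hA0 hB0
  have : (V ^ (p-1) * V ^ (p-1)) = (V ^ (p-1)) ^ 2 := (sq _).symm
  rw [this]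
  nlinarith [mul_le_mul_of_nonneg_right hfin (sq_nonneg (V ^ (p-1)))]

lemma intIntcd {f : ℝ → ℝ} {c d : ℝ} (hc : c ∈ Icc (0:ℝ) 1) (hd : d ∈ Icc (0:ℝ) 1)
    (h : ContinuousOn f (Icc 0 1)) : IntervalIntegrable f MeasureTheory.volume c d :=
  (h.mono (uIcc_subset_Icc hc hd)).intervalIntegrable


section Picone
variable {p : ℝ} (hp : 2 ≤ p) {a : ℝ → ℝ} (ha : ContinuousOn a (Icc 0 1))
  (ha0 : ∀ r ∈ Icc (0:ℝ) 1, 0 ≤ a r)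
  {μ : ℝ} (hμ : 0 < μ) {v v' : ℝ → ℝ} (hv : APSol p μ a v v')
  (hnt : ∃ r ∈ Icc (0:ℝ) 1, v r ≠ 0) (hpos : ∀ r ∈ Icc (0:ℝ) 1, 0 ≤ v r)
include hp ha ha0 hμ hv hnt hpos

theorem picone {u u' : ℝ → ℝ} (hu'c : ContinuousOn u' (Icc 0 1))
    (hud : ∀ r ∈ Icc (0:ℝ) 1, HasDerivWithinAt u (u' r) (Icc 0 1) r) (hu1 : u 1 = 0) :
    μ ^ (p-1) * ((p-1) * ∫ r in (0:ℝ)..1, r ^ (p-2) * a r * |u r| ^ p)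
      ≤ ∫ r in (0:ℝ)..1, |u' r| ^ p := by
  have hp1 : (1:ℝ) < p := by linarith
  have hpm1 : (0:ℝ) < p - 1 := by linarith
  have hpm2 : (0:ℝ) ≤ p - 2 := by linarith
  obtain ⟨hv'c, hvd, heq, hv'0, hv1⟩ := hv
  have hvpos : ∀ r ∈ Ico (0:ℝ) 1, 0 < v r :=
    key_pos hp ha ha0 hμ ⟨hv'c, hvd, heq, hv'0, hv1⟩ hnt hpos
  set w : ℝ → ℝ := fun t => |v' t| ^ (p-2) * v' t with hwdef
  have h01 : (0:ℝ) ∈ Icc (0:ℝ) 1 := by norm_num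
  have h11 : (1:ℝ) ∈ Icc (0:ℝ) 1 := by norm_num
  have hwc : ContinuousOn w (Icc 0 1) :=
    ((cont_abs_rpow hpm2).mul continuous_id).comp_continuousOn hv'c
  have hw0 : w 0 = 0 := by simp only [hwdef, hv'0, mul_zero]
  have hwanti : AntitoneOn w (Icc 0 1) := by
    apply antitoneOn_of_deriv_nonpos (convex_Icc 0 1) hwc
    · intro x hx
      rw [interior_Icc] at hx
      exact ((heq x hx).differentiableAt).differentiableWithinAt
    · intro x hx
      rw [interior_Icc] at hx
      rw [(heq x hx).deriv]
      have h1 : (0:ℝ) ≤ μ ^ (p-1) := Real.rpow_nonneg hμ.le _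
      have h2 : (0:ℝ) ≤ x ^ (p-2) := Real.rpow_nonneg hx.1.le _
      have h3 : 0 ≤ a x := ha0 x ⟨hx.1.le, hx.2.le⟩
      have h4 : 0 ≤ |v x| ^ (p-2) * v x := absmul_nonneg _ (hpos x ⟨hx.1.le, hx.2.le⟩)
      have : 0 ≤ μ ^ (p-1) * (p-1) * x ^ (p-2) * a x * (|v x| ^ (p-2) * v x) :=
        mul_nonneg (mul_nonneg (mul_nonneg (mul_nonneg h1 (by linarith)) h2) h3) h4
      linarith
  have hwle : ∀ t ∈ Icc (0:ℝ) 1, w t ≤ 0 := fun t ht => hw0 ▸ hwanti h01 ht ht.1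
  have hv'le : ∀ t ∈ Icc (0:ℝ) 1, v' t ≤ 0 := fun t ht => absmul_nonpos_imp (hwle t ht)
  have hvc : ContinuousOn v (Icc 0 1) := fun r hr => (hvd r hr).continuousWithinAt
  -- step 1 : ∃ s₀ with w s₀ < 0
  have hs₀ : ∃ s₀ ∈ Ioo (0:ℝ) 1, w s₀ < 0 := by
    by_contra hcon
    push_neg at hcon
    have hwz : ∀ s ∈ Ioo (0:ℝ) 1, w s = 0 :=
      fun s hs => le_antisymm (hwle s ⟨hs.1.le, hs.2.le⟩) (hcon s hs)
    have hv'z : ∀ s ∈ Ioo (0:ℝ) 1, v' s = 0 := fun s hs => absmul_eq_zero_imp (hwz s hs)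
    have hmono : MonotoneOn v (Icc 0 1) := by
      apply monotoneOn_of_deriv_nonneg (convex_Icc 0 1) hvc
      · intro x hx
        rw [interior_Icc] at hx
        exact ((hvd x ⟨hx.1.le, hx.2.le⟩).hasDerivAt
          (Icc_mem_nhds hx.1 hx.2)).differentiableAt.differentiableWithinAt
      · intro x hx
        rw [interior_Icc] at hx
        rw [((hvd x ⟨hx.1.le, hx.2.le⟩).hasDerivAt (Icc_mem_nhds hx.1 hx.2)).deriv,
          hv'z x hx]
    have := hmono h01 h11 zero_le_one
    have hv0 := hvpos 0 ⟨le_refl 0, zero_lt_one⟩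
    rw [hv1] at this
    linarith
  obtain ⟨s₀, hs₀m, hws₀⟩ := hs₀
  set m : ℝ := -v' s₀ with hmdef
  have hv's₀ : v' s₀ < 0 := by
    rcases lt_or_eq_of_le (hv'le s₀ ⟨hs₀m.1.le, hs₀m.2.le⟩) with h | h
    · exact h
    · exfalso
      have : w s₀ = 0 := by simp only [hwdef, h, mul_zero]
      linarith
  have hm : 0 < m := by simp only [hmdef]; linarith
  -- step 3 : v' t ≤ -m on [s₀,1]
  have hv'm : ∀ t ∈ Icc s₀ 1, v' t ≤ -m := by
    intro t ht
    have htm : t ∈ Icc (0:ℝ) 1 := ⟨le_trans hs₀m.1.le ht.1, ht.2⟩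
    have hwt : w t ≤ w s₀ := hwanti ⟨hs₀m.1.le, hs₀m.2.le⟩ htm ht.1
    rw [hwdef] at hwt
    simp only at hwt
    rw [absmul_of_nonpos hp (hv'le t htm), absmul_of_nonpos hp hv's₀.le] at hwt
    have habs : |v' s₀| ^ (p-1) ≤ |v' t| ^ (p-1) := by linarith
    have : |v' s₀| ≤ |v' t| := by
      by_contra hcc
      push_neg at hcc
      have := Real.rpow_lt_rpow (abs_nonneg _) hcc hpm1
      linarith
    rw [abs_of_neg hv's₀, abs_of_nonpos (hv'le t htm)] at this
    simp only [hmdef]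
    linarith
  -- step 4 : v s ≥ m (1 - s) on [s₀, 1]
  have hvlow : ∀ s ∈ Icc s₀ 1, m * (1 - s) ≤ v s := by
    intro s hs
    have hsm : s ∈ Icc (0:ℝ) 1 := ⟨le_trans hs₀m.1.le hs.1, hs.2⟩
    have hftc : ∫ x in s..1, v' x = v 1 - v s := by
      apply ftc_Icc hs.2 (hvc.mono (Icc_subset_Icc hsm.1 le_rfl))
      · intro x hx
        have hxm : x ∈ Icc (0:ℝ) 1 := ⟨le_trans hsm.1 hx.1.le, hx.2.le⟩
        exact (hvd x hxm).hasDerivAt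
          (Icc_mem_nhds (lt_of_le_of_lt hsm.1 hx.1) hx.2)
      · exact intIntcd hsm h11 hv'c
    have hmono2 : (∫ x in s..1, (-m : ℝ)) ≥ ∫ x in s..1, v' x → True := fun _ => trivial
    have hle2 : (∫ x in s..1, v' x) ≤ ∫ x in s..1, (-m : ℝ) := by
      apply integral_mono_on hs.2 (intIntcd hsm h11 hv'c) intervalIntegrable_const
      intro x hx
      exact hv'm x ⟨le_trans hs.1 (by exact hx.1), hx.2⟩
    rw [hftc] at hle2
    simp only [intervalIntegral.integral_const, smul_eq_mul] at hle2
    rw [hv1] at hle2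
    nlinarith [hle2]
  -- bounds
  obtain ⟨Mu, hMu0, hMu⟩ := exists_bound hu'c
  obtain ⟨Ma, hMa0, hMa⟩ := exists_bound ha
  have huc : ContinuousOn u (Icc 0 1) := fun r hr => (hud r hr).continuousWithinAt
  have hub : ∀ s ∈ Icc (0:ℝ) 1, |u s| ≤ Mu * (1 - s) := by
    intro s hs
    have hftc : ∫ x in s..1, u' x = u 1 - u s := by
      apply ftc_Icc hs.2 (huc.mono (Icc_subset_Icc hs.1 le_rfl))
      · intro x hx
        have hxm : x ∈ Icc (0:ℝ) 1 := ⟨le_trans hs.1 hx.1.le, hx.2.le⟩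
        exact (hud x hxm).hasDerivAt (Icc_mem_nhds (lt_of_le_of_lt hs.1 hx.1) hx.2)
      · exact intIntcd hs h11 hu'c
    have hb := intervalIntegral.norm_integral_le_of_norm_le_const
      (C := Mu) (f := u') (a := s) (b := 1) ?_
    · rw [hftc, hu1] at hb
      simp only [Real.norm_eq_abs, zero_sub, abs_neg] at hb
      rw [abs_of_nonneg (by linarith [hs.2] : (0:ℝ) ≤ 1 - s)] at hb
      linarith [hb]
    · intro x hx
      rw [uIoc_of_le hs.2] at hx
      exact hMu x ⟨le_trans hs.1 hx.1.le, hx.2⟩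
  have hubc : ∀ x ∈ Icc (0:ℝ) 1, |u x| ≤ Mu := by
    intro x hx
    refine le_trans (hub x hx) ?_
    nlinarith [hx.1, hx.2]
  -- constants
  set K : ℝ := μ ^ (p-1) * (p-1) with hKdef
  have hK0 : 0 ≤ K := mul_nonneg (Real.rpow_nonneg hμ.le _) (by linarith)
  set g : ℝ → ℝ := fun r => r ^ (p-2) * a r * |u r| ^ p with hgdef
  have hgc : ContinuousOn g (Icc 0 1) := contOn_weight hp ha huc
  have hg0 : ∀ t ∈ Icc (0:ℝ) 1, 0 ≤ g t := by
    intro t ht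
    have h3 : (0:ℝ) ≤ t ^ (p-2) := Real.rpow_nonneg ht.1 _
    exact mul_nonneg (mul_nonneg h3 (ha0 t ht)) (Real.rpow_nonneg (abs_nonneg _) _)
  have hu'pc : ContinuousOn (fun r => |u' r| ^ p) (Icc 0 1) :=
    (cont_abs_rpow (by linarith : (0:ℝ) ≤ p)).comp_continuousOn hu'c
  set N : ℝ := ∫ r in (0:ℝ)..1, |u' r| ^ p with hNdef
  set A1 : ℝ := ∫ r in (0:ℝ)..1, g r with hA1def
  set K₂ : ℝ := (-w 1) * (Mu ^ p / m ^ (p-1)) with hK₂def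
  have hw1 : 0 ≤ -w 1 := by linarith [hwle 1 h11]
  have hmp : (0:ℝ) < m ^ (p-1) := Real.rpow_pos_of_pos hm _
  have hK₂0 : 0 ≤ K₂ :=
    mul_nonneg hw1 (div_nonneg (Real.rpow_nonneg hMu0 _) hmp.le)
  set K₃ : ℝ := K₂ + K * (Ma * Mu ^ p) with hK₃def
  have hK₃0 : 0 ≤ K₃ := by
    have : 0 ≤ K * (Ma * Mu ^ p) :=
      mul_nonneg hK0 (mul_nonneg hMa0 (Real.rpow_nonneg hMu0 _))
    linarith
  -- the main estimate for each s
  have hstep : ∀ s, s₀ ≤ s → s < 1 → K * A1 ≤ N + K₃ * (1 - s) := by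
    intro s hss₀ hs1
    have hs0 : (0:ℝ) < s := lt_of_lt_of_le hs₀m.1 hss₀
    have hs01 : s ∈ Icc (0:ℝ) 1 := ⟨hs0.le, hs1.le⟩
    have sub : Icc (0:ℝ) s ⊆ Icc (0:ℝ) 1 := Icc_subset_Icc le_rfl hs1.le
    have hvposS : ∀ t ∈ Icc (0:ℝ) s, 0 < v t := fun t ht =>
      hvpos t ⟨ht.1, lt_of_le_of_lt ht.2 hs1⟩
    have hvne : ∀ t ∈ Icc (0:ℝ) s, (v t) ^ (p-1) ≠ 0 := fun t ht =>
      (Real.rpow_pos_of_pos (hvposS t ht) _).ne'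
    set θ : ℝ → ℝ := fun t => |u t| ^ p / (v t) ^ (p-1) with hθdef
    set θd : ℝ → ℝ := fun t =>
      (p * |u t| ^ (p-2) * u t * u' t * (v t) ^ (p-1)
        - |u t| ^ p * ((p-1) * (v t) ^ (p-2) * v' t)) / ((v t) ^ (p-1)) ^ 2 with hθddef
    -- continuity facts on Icc 0 s
    have hvp1c : ContinuousOn (fun t => (v t) ^ (p-1)) (Icc 0 s) :=
      (hvc.mono sub).rpow_const (fun x hx => Or.inl (hvposS x hx).ne')
    have hvp2c : ContinuousOn (fun t => (v t) ^ (p-2)) (Icc 0 s) :=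
      (hvc.mono sub).rpow_const (fun x hx => Or.inl (hvposS x hx).ne')
    have hupc : ContinuousOn (fun t => |u t| ^ p) (Icc 0 s) :=
      (cont_abs_rpow (by linarith : (0:ℝ) ≤ p)).comp_continuousOn (huc.mono sub)
    have hup2c : ContinuousOn (fun t => |u t| ^ (p-2) * u t) (Icc 0 s) :=
      ((cont_abs_rpow hpm2).mul continuous_id).comp_continuousOn (huc.mono sub)
    have hθc : ContinuousOn θ (Icc 0 s) := hupc.div hvp1c hvne
    have hθdc : ContinuousOn θd (Icc 0 s) := by
      have habsu2 : ContinuousOn (fun t => |u t| ^ (p-2)) (Icc 0 s) :=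
        (cont_abs_rpow hpm2).comp_continuousOn (huc.mono sub)
      apply ContinuousOn.div
      · apply ContinuousOn.sub
        · exact ((((continuous_const.continuousOn.mul habsu2).mul
            (huc.mono sub)).mul (hu'c.mono sub)).mul hvp1c)
        · exact hupc.mul ((continuous_const.continuousOn.mul hvp2c).mul (hv'c.mono sub))
      · exact hvp1c.pow 2
      · intro x hx
        exact pow_ne_zero 2 (hvne x hx)
    -- derivative of θ
    have hθd : ∀ x ∈ Ioo (0:ℝ) s, HasDerivAt θ (θd x) x := by
      intro x hx
      have hxm : x ∈ Icc (0:ℝ) 1 := ⟨hx.1.le, le_trans hx.2.le hs1.le⟩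
      have hxi : x ∈ Ioo (0:ℝ) 1 := ⟨hx.1, lt_of_lt_of_le hx.2 hs1.le⟩
      have hxs : x ∈ Icc (0:ℝ) s := ⟨hx.1.le, hx.2.le⟩
      have hu : HasDerivAt u (u' x) x :=
        (hud x hxm).hasDerivAt (Icc_mem_nhds hxi.1 hxi.2)
      have hvx : HasDerivAt v (v' x) x :=
        (hvd x hxm).hasDerivAt (Icc_mem_nhds hxi.1 hxi.2)
      have hnum : HasDerivAt (fun t => |u t| ^ p)
          ((p * |u x| ^ (p-2) * u x) * u' x) x :=
        (hasDerivAt_abs_rpow (u x) hp1).comp x hu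
      have hden : HasDerivAt (fun t => (v t) ^ (p-1))
          (((p-1) * (v x) ^ (p-2)) * v' x) x := by
        have h0 := (Real.hasDerivAt_rpow_const
          (x := v x) (p := p-1) (Or.inl (hvposS x hxs).ne')).comp x hvx
        rw [show p - 1 - 1 = p - 2 by ring] at h0
        exact h0

      exact hnum.div hden (hvne x hxs)
    -- pointwise Picone
    have hpic : ∀ x ∈ Icc (0:ℝ) s, w x * θd x ≤ |u' x| ^ p := by
      intro x hx
      exact picone_pt hp (u x) (u' x) (v x) (v' x) (hvposS x hx)
    -- FTC for G = w * θ on [0,s]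
    set G : ℝ → ℝ := fun t => w t * θ t with hGdef
    have hwdθc : ContinuousOn (fun x =>
        -(μ ^ (p-1) * (p-1) * x ^ (p-2) * a x * (|v x| ^ (p-2) * v x)) * θ x) (Icc 0 s) := by
      apply ContinuousOn.mul _ hθc
      apply ContinuousOn.neg
      apply ContinuousOn.mul
      apply ContinuousOn.mul
      · exact (continuous_const.mul (cont_rpow hpm2)).continuousOn
      · exact ha.mono sub
      · exact ((cont_abs_rpow hpm2).mul continuous_id).comp_continuousOn (hvc.mono sub)
    have hwθdc : ContinuousOn (fun x => w x * θd x) (Icc 0 s) := (hwc.mono sub).mul hθdc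
    have hIc : ∀ {f : ℝ → ℝ}, ContinuousOn f (Icc 0 s) →
        IntervalIntegrable f MeasureTheory.volume 0 s := by
      intro f hf
      exact ContinuousOn.intervalIntegrable (by rwa [uIcc_of_le hs0.le])
    have hftcG : (∫ x in (0:ℝ)..s,
        (-(μ ^ (p-1) * (p-1) * x ^ (p-2) * a x * (|v x| ^ (p-2) * v x)) * θ x
          + w x * θd x)) = G s := by
      have hd : ∀ x ∈ Ioo (0:ℝ) s, HasDerivAt G
          (-(μ ^ (p-1) * (p-1) * x ^ (p-2) * a x * (|v x| ^ (p-2) * v x)) * θ x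
            + w x * θd x) x := by
        intro x hx
        have hxi : x ∈ Ioo (0:ℝ) 1 := ⟨hx.1, lt_of_lt_of_le hx.2 hs1.le⟩
        exact (heq x hxi).mul (hθd x hx)
      rw [ftc_Icc hs0.le ((hwc.mono sub).mul hθc) hd (hIc (hwdθc.add hwθdc))]
      simp only [hGdef, Pi.mul_apply]
      rw [hw0]
      ring
    rw [integral_add (hIc hwdθc) (hIc hwθdc)] at hftcG
    -- identify the first integral
    have e2 : (∫ x in (0:ℝ)..s,
        -(μ ^ (p-1) * (p-1) * x ^ (p-2) * a x * (|v x| ^ (p-2) * v x)) * θ x)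
        = -(K * ∫ x in (0:ℝ)..s, g x) := by
      have hcong : EqOn (fun x =>
          -(μ ^ (p-1) * (p-1) * x ^ (p-2) * a x * (|v x| ^ (p-2) * v x)) * θ x)
          (fun x => -K * g x) (uIcc 0 s) := by
        intro x hx
        rw [uIcc_of_le hs0.le] at hx
        have hvx := hvposS x hx
        have hne := hvne x hx
        simp only [hθdef, hgdef, hKdef]
        rw [absmul_of_pos hvx]
        field_simp
      rw [intervalIntegral.integral_congr hcong]
      rw [integral_const_mul]
      ring
    rw [e2] at hftcG
    -- integral inequality
    have e3 : (∫ x in (0:ℝ)..s, w x * θd x) ≤ ∫ x in (0:ℝ)..s, |u' x| ^ p := by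
      apply integral_mono_on hs0.le (hIc hwθdc) (hIc (hu'pc.mono sub))
      exact hpic
    -- combine: K * ∫₀ˢ g = ∫₀ˢ wθd - G s
    have hcomb : K * (∫ x in (0:ℝ)..s, g x) ≤ (∫ x in (0:ℝ)..s, |u' x| ^ p) - G s := by
      linarith [hftcG, e3]
    -- tail bounds
    have hb1 : (∫ x in (0:ℝ)..s, |u' x| ^ p) ≤ N := by
      have hadj := integral_add_adjacent_intervals
        (intIntcd h01 hs01 hu'pc) (intIntcd hs01 h11 hu'pc)
      have hnn : 0 ≤ ∫ x in s..(1:ℝ), |u' x| ^ p :=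
        integral_nonneg hs1.le (fun x _ => Real.rpow_nonneg (abs_nonneg _) _)
      simp only [hNdef]
      linarith [hadj, hnn]
    have hb2 : -G s ≤ K₂ * (1 - s) := by
      have hs1' : (0:ℝ) < 1 - s := by linarith
      have hvs : 0 < v s := hvpos s ⟨hs0.le, hs1⟩
      have hθs0 : 0 ≤ θ s :=
        div_nonneg (Real.rpow_nonneg (abs_nonneg _) _) (Real.rpow_nonneg hvs.le _)
      have hwmono : w 1 ≤ w s := hwanti hs01 h11 hs1.le
      have hθbound : θ s ≤ Mu ^ p / m ^ (p-1) * (1 - s) := by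
        have hnum : |u s| ^ p ≤ Mu ^ p * (1-s) ^ p := by
          have h5 := Real.rpow_le_rpow (abs_nonneg (u s)) (hub s hs01)
            (by linarith : (0:ℝ) ≤ p)
          rwa [Real.mul_rpow hMu0 hs1'.le] at h5
        have hden : m ^ (p-1) * (1-s) ^ (p-1) ≤ (v s) ^ (p-1) := by
          have h5 := Real.rpow_le_rpow (by positivity) (hvlow s ⟨hss₀, hs1.le⟩)
            (by linarith : (0:ℝ) ≤ p - 1)
          rwa [Real.mul_rpow hm.le hs1'.le] at h5
        have hdenpos : 0 < m ^ (p-1) * (1-s) ^ (p-1) :=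
          mul_pos hmp (Real.rpow_pos_of_pos hs1' _)
        have h6 : θ s ≤ Mu ^ p * (1-s) ^ p / (m ^ (p-1) * (1-s) ^ (p-1)) := by
          simp only [hθdef]
          exact div_le_div₀ (by positivity) hnum hdenpos hden
        have h7 : Mu ^ p * (1-s) ^ p / (m ^ (p-1) * (1-s) ^ (p-1))
            = Mu ^ p / m ^ (p-1) * (1 - s) := by
          rw [show (1-s) ^ p = (1-s) ^ (p-1) * (1-s) by
            rw [← Real.rpow_add_one hs1'.ne']; ring_nf]
          have hne2 : (1-s) ^ (p-1) ≠ 0 := (Real.rpow_pos_of_pos hs1' _).ne'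
          field_simp
        linarith
      calc -G s = (-w s) * θ s := by simp only [hGdef]; ring
        _ ≤ (-w 1) * θ s := mul_le_mul_of_nonneg_right (by linarith) hθs0
        _ ≤ (-w 1) * (Mu ^ p / m ^ (p-1) * (1 - s)) :=
            mul_le_mul_of_nonneg_left hθbound hw1
        _ = K₂ * (1 - s) := by simp only [hK₂def]; ring
    have hb3 : K * A1 ≤ K * (∫ x in (0:ℝ)..s, g x) + K * (Ma * Mu ^ p) * (1 - s) := by
      have hadj := integral_add_adjacent_intervals
        (intIntcd h01 hs01 hgc) (intIntcd hs01 h11 hgc)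
      have htail : (∫ x in s..(1:ℝ), g x) ≤ Ma * Mu ^ p * (1 - s) := by
        have hmono3 : (∫ x in s..(1:ℝ), g x) ≤ ∫ _ in s..(1:ℝ), Ma * Mu ^ p := by
          apply integral_mono_on hs1.le (intIntcd hs01 h11 hgc) intervalIntegrable_const
          intro x hx
          have hxm : x ∈ Icc (0:ℝ) 1 := ⟨le_trans hs0.le hx.1, hx.2⟩
          have h5 : x ^ (p-2) ≤ 1 := Real.rpow_le_one hxm.1 hxm.2 hpm2
          have h6 : a x ≤ Ma := le_trans (le_abs_self _) (hMa x hxm)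
          have h7 : |u x| ^ p ≤ Mu ^ p :=
            Real.rpow_le_rpow (abs_nonneg _) (hubc x hxm) (by linarith)
          have h8 : (0:ℝ) ≤ x ^ (p-2) := Real.rpow_nonneg hxm.1 _
          have h9 : (0:ℝ) ≤ a x := ha0 x hxm
          have h10 : (0:ℝ) ≤ |u x| ^ p := Real.rpow_nonneg (abs_nonneg _) _
          simp only [hgdef]
          have hs1' : x ^ (p-2) * a x ≤ 1 * Ma := mul_le_mul h5 h6 h9 zero_le_one
          have hs2' : x ^ (p-2) * a x * |u x| ^ p ≤ 1 * Ma * Mu ^ p :=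
            mul_le_mul hs1' h7 h10 (by nlinarith)
          linarith
        simp only [intervalIntegral.integral_const, smul_eq_mul] at hmono3
        nlinarith [hmono3]
      have h11' : A1 ≤ (∫ x in (0:ℝ)..s, g x) + Ma * Mu ^ p * (1 - s) := by
        simp only [hA1def]
        linarith [hadj, htail]
      nlinarith [h11', hK0]
    calc K * A1 ≤ K * (∫ x in (0:ℝ)..s, g x) + K * (Ma * Mu ^ p) * (1 - s) := hb3
      _ ≤ ((∫ x in (0:ℝ)..s, |u' x| ^ p) - G s) + K * (Ma * Mu ^ p) * (1 - s) := by
          linarith [hcomb]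
      _ ≤ N + K₂ * (1 - s) + K * (Ma * Mu ^ p) * (1 - s) := by linarith [hb1, hb2]
      _ = N + K₃ * (1 - s) := by simp only [hK₃def]; ring
  -- pass to the limit s → 1
  have hfinal : K * A1 ≤ N := by
    by_contra hcon
    push_neg at hcon
    set d : ℝ := K * A1 - N with hddef
    have hd0 : 0 < d := by simp only [hddef]; linarith
    set s : ℝ := max s₀ (1 - d / (K₃ + 1)) with hsdef
    have hq : 0 < d / (K₃ + 1) := div_pos hd0 (by linarith)
    have hss₀ : s₀ ≤ s := le_max_left _ _
    have hs1 : s < 1 := by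
      apply max_lt hs₀m.2
      linarith
    have hs2 : 1 - s ≤ d / (K₃ + 1) := by
      have := le_max_right s₀ (1 - d / (K₃ + 1))
      simp only [hsdef]
      linarith [this]
    have := hstep s hss₀ hs1
    have hK₃s : K₃ * (1 - s) < d := by
      calc K₃ * (1 - s) ≤ K₃ * (d / (K₃ + 1)) := by
            apply mul_le_mul_of_nonneg_left hs2 hK₃0
        _ < d := by
            rw [mul_div_assoc']
            rw [div_lt_iff₀ (by linarith : (0:ℝ) < K₃ + 1)]
            nlinarith
    simp only [hddef] at hK₃s
    linarith
  calc μ ^ (p-1) * ((p-1) * ∫ r in (0:ℝ)..1, r ^ (p-2) * a r * |u r| ^ p)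
      = K * A1 := by simp only [hKdef, hA1def, hgdef]; ring
    _ ≤ N := hfinal

end Picone

lemma key {p : ℝ} (hp : 2 ≤ p) {a : ℝ → ℝ} (ha : ContinuousOn a (Icc 0 1))
    (ha0 : ∀ r ∈ Icc (0:ℝ) 1, 0 ≤ a r)
    (hanv : ∀ s t : ℝ, 0 ≤ s → s < t → t ≤ 1 → ∃ r ∈ Ioo s t, a r ≠ 0)
    {μ : ℝ} (hμ : 0 < μ) {v v' : ℝ → ℝ} (hv : APSol p μ a v v')
    (hnt : ∃ r ∈ Icc (0:ℝ) 1, v r ≠ 0) (hpos : ∀ r ∈ Icc (0:ℝ) 1, 0 ≤ v r) :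
    mu1 a p = μ := by
  have hpm1 : (0:ℝ) < p - 1 := by linarith
  have hpne : p - 1 ≠ 0 := ne_of_gt hpm1
  have hvc : ContinuousOn v (Icc 0 1) := fun r hr => (hv.2.1 r hr).continuousWithinAt
  have hD := denom_pos hp ha ha0 hanv hvc hv.2.2.2.2 hnt
  have hN := rayleigh_identity hp ha hv
  have hDne : (p - 1) * (∫ r in (0:ℝ)..1, r ^ (p-2) * a r * |v r| ^ p) ≠ 0 :=
    (mul_pos hpm1 hD).ne'
  have hmem : μ ^ (p-1) ∈ { q : ℝ | ∃ V V' : ℝ → ℝ,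
      ContinuousOn V' (Icc 0 1) ∧
      (∀ r ∈ Icc (0:ℝ) 1, HasDerivWithinAt V (V' r) (Icc 0 1) r) ∧
      V' 0 = 0 ∧ V 1 = 0 ∧ (∃ r ∈ Icc (0:ℝ) 1, V r ≠ 0) ∧
      q = (∫ r in (0:ℝ)..1, |V' r| ^ p) /
          ((p - 1) * ∫ r in (0:ℝ)..1, r ^ (p - 2) * a r * |V r| ^ p) } := by
    refine ⟨v, v', hv.1, hv.2.1, hv.2.2.2.1, hv.2.2.2.2, hnt, ?_⟩
    rw [eq_div_iff hDne, hN]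
  have hbdd : BddBelow { q : ℝ | ∃ V V' : ℝ → ℝ,
      ContinuousOn V' (Icc 0 1) ∧
      (∀ r ∈ Icc (0:ℝ) 1, HasDerivWithinAt V (V' r) (Icc 0 1) r) ∧
      V' 0 = 0 ∧ V 1 = 0 ∧ (∃ r ∈ Icc (0:ℝ) 1, V r ≠ 0) ∧
      q = (∫ r in (0:ℝ)..1, |V' r| ^ p) /
          ((p - 1) * ∫ r in (0:ℝ)..1, r ^ (p - 2) * a r * |V r| ^ p) } := by
    refine ⟨0, fun q hq => ?_⟩
    obtain ⟨V, V', h1, h2, h3, h4, h5, h6⟩ := hq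
    rw [h6]
    apply div_nonneg
    · apply integral_nonneg zero_le_one
      intro x _
      exact Real.rpow_nonneg (abs_nonneg _) _
    · apply mul_nonneg hpm1.le
      apply integral_nonneg zero_le_one
      intro x hx
      exact mul_nonneg (mul_nonneg (Real.rpow_nonneg hx.1 _) (ha0 x hx))
        (Real.rpow_nonneg (abs_nonneg _) _)
  have hle : eta1 a p ≤ μ ^ (p-1) := csInf_le hbdd hmem
  have hge : μ ^ (p-1) ≤ eta1 a p := by
    apply le_csInf ⟨_, hmem⟩
    rintro q ⟨U, U', h1, h2, h3, h4, h5, rfl⟩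
    have hUc : ContinuousOn U (Icc 0 1) := fun r hr => (h2 r hr).continuousWithinAt
    have hDU := denom_pos hp ha ha0 hanv hUc h4 h5
    have hP := picone hp ha ha0 hμ hv hnt hpos h1 h2 h4
    rw [le_div_iff₀ (mul_pos hpm1 hDU)]
    exact hP
  have heta : eta1 a p = μ ^ (p-1) := le_antisymm hle hge
  rw [mu1, heta, ← Real.rpow_mul hμ.le, mul_one_div, div_self hpne, Real.rpow_one]

lemma APSol_neg {p μ : ℝ} {a v v' : ℝ → ℝ} (hv : APSol p μ a v v') :
    APSol p μ a (fun t => -v t) (fun t => -v' t) := by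
  obtain ⟨h1, h2, h3, h4, h5⟩ := hv
  refine ⟨h1.neg, fun r hr => (h2 r hr).neg, ?_, by simp [h4], by simp [h5]⟩
  intro r hr
  have h := (h3 r hr).neg
  have hfun : (fun t => -(|v' t| ^ (p-2) * v' t))
      = fun t => |(-v' t)| ^ (p-2) * (-v' t) := by
    funext t
    rw [abs_neg]
    ring
  rw [show (-fun t => |v' t| ^ (p-2) * v' t) = _ from hfun] at h
  exact h.congr_deriv (by simp only [abs_neg]; ring)

lemma sign_closure {v : ℝ → ℝ} (hvc : ContinuousOn v (Icc 0 1))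
    (h : ∀ r ∈ Ioo (0:ℝ) 1, v r ≤ 0) (hv1 : v 1 = 0) :
    ∀ r ∈ Icc (0:ℝ) 1, v r ≤ 0 := by
  intro r hr
  rcases eq_or_lt_of_le hr.1 with h0 | h0
  · -- r = 0
    subst h0
    have hcl : (0:ℝ) ∈ closure (Ioo (0:ℝ) 1) := by
      rw [closure_Ioo one_ne_zero.symm]
      exact ⟨le_refl 0, zero_le_one⟩
    haveI : (𝓝[Ioo (0:ℝ) 1] 0).NeBot := mem_closure_iff_nhdsWithin_neBot.1 hcl
    have ht : Tendsto v (𝓝[Ioo (0:ℝ) 1] 0) (𝓝 (v 0)) :=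
      (hvc 0 ⟨le_refl 0, zero_le_one⟩).mono Ioo_subset_Icc_self
    apply le_of_tendsto ht
    filter_upwards [self_mem_nhdsWithin] with x hx
    exact h x hx
  · rcases eq_or_lt_of_le hr.2 with h1 | h1
    · rw [h1, hv1]
    · exact h r ⟨h0, h1⟩

theorem stmt3 (p : ℝ) (hp : 2 ≤ p) (a : ℝ → ℝ)
    (ha : ContinuousOn a (Icc 0 1)) (ha0 : ∀ r ∈ Icc (0:ℝ) 1, 0 ≤ a r)
    (hanv : ∀ s t : ℝ, 0 ≤ s → s < t → t ≤ 1 → ∃ r ∈ Ioo s t, a r ≠ 0)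
    (μ : ℝ) (hμ : 0 < μ) (hμne : μ ≠ mu1 a p)
    (v v' : ℝ → ℝ) (hv : APSol p μ a v v')
    (hnt : ∃ r ∈ Icc (0:ℝ) 1, v r ≠ 0) :
    (∃ r₁ ∈ Ioo (0:ℝ) 1, 0 < v r₁) ∧ (∃ r₂ ∈ Ioo (0:ℝ) 1, v r₂ < 0) := by
  have hvc : ContinuousOn v (Icc 0 1) := fun r hr => (hv.2.1 r hr).continuousWithinAt
  constructor
  · by_contra h1
    push_neg at h1
    have hle : ∀ r ∈ Icc (0:ℝ) 1, v r ≤ 0 := sign_closure hvc h1 hv.2.2.2.2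
    have hnt' : ∃ r ∈ Icc (0:ℝ) 1, -v r ≠ 0 := by
      obtain ⟨r, hr, hrne⟩ := hnt
      exact ⟨r, hr, by simpa using hrne⟩
    have := key hp ha ha0 hanv hμ (APSol_neg hv) hnt'
      (fun r hr => by have := hle r hr; simpa using this)
    exact hμne this.symm
  · by_contra h2
    push_neg at h2
    have hge : ∀ r ∈ Icc (0:ℝ) 1, 0 ≤ v r := by
      have := sign_closure (v := fun t => -v t) hvc.neg
        (fun r hr => by simpa using h2 r hr) (by simp [hv.2.2.2.2])
      intro r hr
      have h3 := this r hr
      simpa using h3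
    have := key hp ha ha0 hanv hμ hv hnt hge
    exact hμne this.symm
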